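/- No graph has multiset dimension 2; i.e., any m-resolving set W of a connected graph with |W| = 2 leads to a contradiction, since the two vertices of W have equal representation multisets. -/

import Mathlib

open SimpleGraph

/-- The multiset of distances from `v` to the vertices of `W`. -/
noncomputable def mrep {V : Type*} (G : SimpleGraph V) (W : Finset V) (v : V) : Multiset ℕ :=
  W.val.map (fun w => G.dist v w)

/-- `W` is an m-resolving set of `G`: distinct vertices have distinct
representation multisets. -/
def IsMResolving {V : Type*} (G : SimpleGraph V) (W : Finset V) : Prop :=
  ∀ u v : V, u ≠ v → mrep G W u ≠ mrep G W v

/-- The multiset dimension of `G`, equal to `⊤` if `G` has no m-resolving set. -/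
noncomputable def mdim {V : Type*} (G : SimpleGraph V) : ℕ∞ :=
  ⨅ W : {W : Finset V // IsMResolving G W}, (W.1.card : ℕ∞)

theorem stmt_3 {V : Type*} (G : SimpleGraph V) (hG : G.Connected) :
    (∀ W : Finset V, W.card = 2 → ¬ IsMResolving G W) ∧ mdim G ≠ 2 := by
  have key : ∀ W : Finset V, W.card = 2 → ¬ IsMResolving G W := by
    classical
    intro W hW hres
    obtain ⟨a, b, hab, rfl⟩ := Finset.card_eq_two.mp hW
    have hval : ({a, b} : Finset V).val = {a, b} := by
      rw [Finset.insert_val, Finset.singleton_val,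
        Multiset.ndinsert_of_notMem (by simp [hab])]; rfl
    apply hres a b hab
    simp only [mrep, hval, Multiset.insert_eq_cons, Multiset.map_cons, Multiset.map_singleton]
    rw [G.dist_self, G.dist_self, G.dist_comm]
    exact Multiset.cons_swap _ _ _
  refine ⟨key, fun h => ?_⟩
  have h3 : mdim G < 3 := by rw [h]; norm_num
  rw [mdim, iInf_lt_iff] at h3
  obtain ⟨⟨W, hres⟩, hlt⟩ := h3
  have hge : (2 : ℕ∞) ≤ (W.card : ℕ∞) := by
    have := iInf_le (fun W' : {W : Finset V // IsMResolving G W} => (W'.1.card : ℕ∞)) ⟨W, hres⟩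
    rw [← h]; exact this
  have : W.card = 2 := by
    have hle : (W.card : ℕ∞) ≤ 2 := by
      exact_mod_cast Order.le_of_lt_succ (by exact_mod_cast hlt)
    exact_mod_cast le_antisymm hle hge
  exact key W this hres
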